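/- Let A, B partition a set V of size n, let ζ ≥ 1, δ = 1/ζ − 1/n, g = ⌊n/ζ⌋, and let S be a set of size g−1 or g with S ⊆ V. If |S ∩ A| ≤ δ|A| (i.e., S fails to represent A δ-fairly even without the floor), then |S ∩ B| > δ|B| − 1. -/

import Mathlib

open Finset

/-- The key combinatorial step: if `(A,B)` partitions `V` (`|V| = n`), `δ = 1/ζ - 1/n`,
`g = ⌊n/ζ⌋`, `S ⊆ V` has size `g-1` or `g`, and `|S ∩ A| ≤ δ|A|`, then
`|S ∩ B| > δ|B| - 1`. -/
theorem stmt11 {V : Type*} [Fintype V] [DecidableEq V]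
    (A B : Finset V) (hdisj : Disjoint A B) (hcover : A ∪ B = Finset.univ)
    (n : ℕ) (hn : n = Fintype.card V) (hn0 : 0 < n)
    (ζ δ : ℝ) (hζ : 1 ≤ ζ) (hδ : δ = 1 / ζ - 1 / (n : ℝ))
    (g : ℕ) (hg : g = ⌊(n : ℝ) / ζ⌋₊) (hg1 : 1 ≤ g)
    (S : Finset V) (hScard : S.card = g - 1 ∨ S.card = g)
    (hA : ((S ∩ A).card : ℝ) ≤ δ * (A.card : ℝ)) :
    δ * (B.card : ℝ) - 1 < ((S ∩ B).card : ℝ) := by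
  have hd : Disjoint (S ∩ A) (S ∩ B) :=
    hdisj.mono inter_subset_right inter_subset_right
  have hu : (S ∩ A) ∪ (S ∩ B) = S := by
    rw [← inter_union_distrib_left, hcover, inter_univ]
  have hsum : (S ∩ A).card + (S ∩ B).card = S.card := by
    rw [← card_union_of_disjoint hd, hu]
  have hn' : A.card + B.card = n := by
    rw [hn, ← Finset.card_univ, ← hcover, card_union_of_disjoint hdisj]
  have hfloor : (n : ℝ) / ζ - 1 < (g : ℝ) := by
    rw [hg]; exact Nat.sub_one_lt_floor _
  have hS : (g : ℝ) - 1 ≤ (S.card : ℝ) := by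
    rcases hScard with h | h
    · rw [h, Nat.cast_sub hg1, Nat.cast_one]
    · rw [h]; linarith
  have hζ0 : (0 : ℝ) < ζ := by linarith
  have hn0' : (0 : ℝ) < (n : ℝ) := by exact_mod_cast hn0
  have hδn : δ * (n : ℝ) = (n : ℝ) / ζ - 1 := by
    rw [hδ]; field_simp
  have hB : (B.card : ℝ) = (n : ℝ) - (A.card : ℝ) := by
    have : ((A.card + B.card : ℕ) : ℝ) = (n : ℝ) := by exact_mod_cast hn'
    push_cast at this; linarith
  have hSB : ((S ∩ B).card : ℝ) = (S.card : ℝ) - ((S ∩ A).card : ℝ) := by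
    have : (((S ∩ A).card + (S ∩ B).card : ℕ) : ℝ) = (S.card : ℝ) := by
      exact_mod_cast hsum
    push_cast at this; linarith
  have hexp : δ * (B.card : ℝ) = δ * (n : ℝ) - δ * (A.card : ℝ) := by
    rw [hB]; ring
  linarith
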